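/- Let n be a positive integer, let v ∈ ℂⁿ, and let W be a linear subspace of ℂⁿ whose dimension is strictly less than the number of nonzero coordinates of v. Then the set {d ∈ ℂⁿ : d_i ≠ 0 for all i, and the vector (v_1/d_1, …, v_n/d_n) lies in W} is a Lebesgue-null subset of ℂⁿ. (This is the genericity step in the converse proof of the paper: a fixed interference vector with more than n/2 nonzero entries lies in a fixed (n/2)-dimensional subspace after inverse diagonal channel scaling only for a measure-zero set of channel realizations.) -/

import Mathlib

open MeasureTheory Set

/-- Genericity step: a fixed vector `v` whose support is strictly larger than
`dim W` lies in `W` after componentwise division by a nowhere-zero diagonal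
channel vector `d` only for a Lebesgue-null set of `d`. -/
theorem stmt_5 (n : ℕ) (hn : 0 < n) (v : Fin n → ℂ) (W : Submodule ℂ (Fin n → ℂ))
    (h : Module.finrank ℂ W < {i : Fin n | v i ≠ 0}.ncard) :
    MeasureTheory.volume
      {d : Fin n → ℂ | (∀ i, d i ≠ 0) ∧ (fun i => v i / d i) ∈ W} = 0 := by
  classical
  set L : (Fin n → ℂ) →ₗ[ℂ] (Fin n → ℂ) :=
    LinearMap.pi (fun i => v i • LinearMap.proj i) with hLdef
  have hLapp : ∀ (e : Fin n → ℂ) (i : Fin n), L e i = v i * e i := by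
    intro e i; simp [hLdef]
  -- The comap submodule is a proper subspace.
  have hne : W.comap L ≠ ⊤ := by
    intro htop
    have hs : ∀ i : Fin n, v i ≠ 0 → (Pi.single i (1 : ℂ)) ∈ W := by
      intro i hi
      have hmem : L (Pi.single i (v i)⁻¹) ∈ W :=
        Submodule.eq_top_iff'.1 htop (Pi.single i (v i)⁻¹)
      have heq : L (Pi.single i (v i)⁻¹) = Pi.single i (1 : ℂ) := by
        funext j
        rw [hLapp]
        rcases eq_or_ne j i with rfl | hji
        · simp [mul_inv_cancel₀ hi]
        · simp [Pi.single_eq_of_ne hji]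
      rwa [heq] at hmem
    set S : Set (Fin n) := {i : Fin n | v i ≠ 0} with hSdef
    haveI : Fintype S := Fintype.ofFinite S
    set g : S → W := fun i => ⟨Pi.single (i : Fin n) (1 : ℂ), hs i i.2⟩ with hgdef
    have hli : LinearIndependent ℂ g := by
      apply LinearIndependent.of_comp W.subtype
      have hcomp : (W.subtype ∘ g) = fun i : S => Pi.single (i : Fin n) (1 : ℂ) := by
        funext i; simp [hgdef]
      rw [hcomp]
      have hb : LinearIndependent ℂ (fun i : Fin n => Pi.single i (1 : ℂ)) := by
        have h0 := (Pi.basisFun ℂ (Fin n)).linearIndependent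
        have he : ⇑(Pi.basisFun ℂ (Fin n)) = fun i : Fin n => Pi.single i (1 : ℂ) := by
          funext i; exact Pi.basisFun_apply ..
        rwa [he] at h0
      exact hb.comp (Subtype.val : S → Fin n) Subtype.val_injective
    have hcard : Fintype.card S ≤ Module.finrank ℂ W := hli.fintype_card_le_finrank
    have hcard' : S.ncard = Fintype.card S := by
      rw [← Nat.card_coe_set_eq, Nat.card_eq_fintype_card]
    omega
  -- The corresponding real submodule is null.
  have hneR : (Submodule.restrictScalars ℝ (W.comap L)) ≠ ⊤ := by
    intro ht
    apply hne
    rw [Submodule.eq_top_iff'] at ht ⊢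
    intro x; simpa using ht x
  have hV0 : volume ((W.comap L : Submodule ℂ (Fin n → ℂ)) : Set (Fin n → ℂ)) = 0 := by
    have := Measure.addHaar_submodule (volume : Measure (Fin n → ℂ))
      (Submodule.restrictScalars ℝ (W.comap L)) hneR
    simpa using this
  -- Inversion map and its derivative.
  set f : (Fin n → ℂ) → (Fin n → ℂ) := fun d i => (d i)⁻¹ with hfdef
  set f' : (Fin n → ℂ) → ((Fin n → ℂ) →L[ℝ] (Fin n → ℂ)) := fun d =>
    (ContinuousLinearMap.pi (fun i =>
      (-(d i ^ 2)⁻¹) • (ContinuousLinearMap.proj i : (Fin n → ℂ) →L[ℂ] ℂ))).restrictScalars ℝ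
    with hf'def
  set s : Set (Fin n → ℂ) :=
    ((W.comap L : Submodule ℂ (Fin n → ℂ)) : Set (Fin n → ℂ)) ∩ {d | ∀ i, d i ≠ 0} with hsdef
  have hopen : IsOpen {d : Fin n → ℂ | ∀ i, d i ≠ 0} := by
    have : {d : Fin n → ℂ | ∀ i, d i ≠ 0} = ⋂ i, (fun d : Fin n → ℂ => d i) ⁻¹' ({0}ᶜ) := by
      ext d; simp
    rw [this]
    exact isOpen_iInter_of_finite fun i =>
      (continuous_apply i).isOpen_preimage _ isOpen_compl_singleton
  have hsmeas : MeasurableSet s :=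
    ((Submodule.closed_of_finiteDimensional
      (W.comap L : Submodule ℂ (Fin n → ℂ))).measurableSet).inter hopen.measurableSet
  have hs0 : volume s = 0 :=
    measure_mono_null Set.inter_subset_left hV0
  have hderiv : ∀ d ∈ s, HasFDerivWithinAt f (f' d) s d := by
    intro d hd
    apply HasFDerivAt.hasFDerivWithinAt
    apply HasFDerivAt.restrictScalars ℝ (f' := ContinuousLinearMap.pi (fun i =>
      (-(d i ^ 2)⁻¹) • (ContinuousLinearMap.proj i : (Fin n → ℂ) →L[ℂ] ℂ)))
    apply hasFDerivAt_pi.2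
    intro i
    have h1 : HasFDerivAt (fun x : Fin n → ℂ => (x i)⁻¹)
        (((1 : ℂ →L[ℂ] ℂ).smulRight (-(d i ^ 2)⁻¹)).comp
          (ContinuousLinearMap.proj i : (Fin n → ℂ) →L[ℂ] ℂ)) d :=
      (hasDerivAt_inv (hd.2 i)).hasFDerivAt.comp d (hasFDerivAt_apply i d)
    refine h1.congr_fderiv ?_
    ext x
    simp [mul_comm]
  have himg : volume (f '' s) = 0 := by
    have hle := addHaar_image_le_lintegral_abs_det_fderiv volume hsmeas hderiv
    have : ∫⁻ x in s, ENNReal.ofReal |(f' x).det| ∂volume = 0 :=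
      setLIntegral_measure_zero _ _ hs0
    rw [this] at hle
    exact le_antisymm hle zero_le
  refine measure_mono_null ?_ himg
  rintro d ⟨hd1, hd2⟩
  refine ⟨f d, ⟨?_, ?_⟩, ?_⟩
  · show L (f d) ∈ W
    have : L (f d) = fun i => v i / d i := by
      funext i; rw [hLapp]; simp [hfdef, div_eq_mul_inv]
    rwa [this]
  · intro i
    exact inv_ne_zero (hd1 i)
  · funext i
    simp [hfdef]
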